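/- arXiv:2604.21302 — 3 statements merged into one kernel-verified Lean document; each statement's English description precedes it below -/
import Mathlib

section
/- Let P, P̃ be symmetric positive semidefinite n×n matrices with P ⪯ P̃, H an m×n matrix, R a symmetric positive definite m×m matrix, and define g(P) = P Hᵀ (H P Hᵀ + R)⁻¹ H P. If v is a vector with P v = P̃ v =: w, then vᵀ g(P) v ≥ vᵀ g(P̃) v. -/
open Matrix

private lemma quad_eq {n m : ℕ} (P : Matrix (Fin n) (Fin n) ℝ) (hP : P.IsHermitian)
    (H : Matrix (Fin m) (Fin n) ℝ) (B : Matrix (Fin m) (Fin m) ℝ)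
    (v w : Fin n → ℝ) (hPv : P.mulVec v = w) :
    v ⬝ᵥ (P * Hᵀ * B * H * P).mulVec v = (H.mulVec w) ⬝ᵥ B.mulVec (H.mulVec w) := by
  have hPT : Pᵀ = P := by simpa [Matrix.IsHermitian] using hP
  rw [← mulVec_mulVec, hPv, ← mulVec_mulVec, ← mulVec_mulVec]
  rw [dotProduct_mulVec, ← mulVec_transpose, transpose_mul, transpose_transpose, hPT, ← mulVec_mulVec, hPv]

/-- quadratic form of inverse is antitone -/
private lemma inv_quad_antitone {m : ℕ} (B Bt : Matrix (Fin m) (Fin m) ℝ)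
    (hB : B.PosDef) (hBt : Bt.PosDef) (hle : (Bt - B).PosSemidef)
    (x : Fin m → ℝ) :
    x ⬝ᵥ Bt⁻¹.mulVec x ≤ x ⬝ᵥ B⁻¹.mulVec x := by
  set a := B⁻¹.mulVec x with ha
  set b := Bt⁻¹.mulVec x with hb
  have hBa : B.mulVec a = x := by
    rw [ha, mulVec_mulVec, mul_nonsing_inv _ hB.det_pos.ne'.isUnit, one_mulVec]
  have hBtb : Bt.mulVec b = x := by
    rw [hb, mulVec_mulVec, mul_nonsing_inv _ hBt.det_pos.ne'.isUnit, one_mulVec]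
  have key : (0:ℝ) ≤ (a - b) ⬝ᵥ B.mulVec (a - b) + b ⬝ᵥ (Bt - B).mulVec b := by
    have h1 := hB.posSemidef.dotProduct_mulVec_nonneg (a - b)
    have h2 := hle.dotProduct_mulVec_nonneg b
    simp only [RCLike.star_def, starRingEnd_apply, star_trivial] at h1 h2
    positivity
  have hsymm : a ⬝ᵥ B.mulVec b = b ⬝ᵥ x := by
    rw [dotProduct_mulVec, ← mulVec_transpose,
      show Bᵀ = B from by simpa [Matrix.IsHermitian] using hB.isHermitian, hBa,
      dotProduct_comm]
  have expand : (a - b) ⬝ᵥ B.mulVec (a - b) + b ⬝ᵥ (Bt - B).mulVec b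
      = x ⬝ᵥ a - x ⬝ᵥ b := by
    simp only [sub_mulVec, mulVec_sub, sub_dotProduct, dotProduct_sub, hBtb]
    have hax : a ⬝ᵥ B.mulVec a = x ⬝ᵥ a := by
      rw [dotProduct_mulVec, ← mulVec_transpose,
        show Bᵀ = B from by simpa [Matrix.IsHermitian] using hB.isHermitian, hBa]
    have hbx : b ⬝ᵥ B.mulVec a = x ⬝ᵥ b := by rw [hBa, dotProduct_comm]
    rw [hax, hsymm, hbx]
    ring
  rw [expand] at key
  have : x ⬝ᵥ b ≤ x ⬝ᵥ a := by linarith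
  simpa [ha, hb] using this

/-- Kernel comparison for the Kalman covariance jump map
`g(P) = P Hᵀ (H P Hᵀ + R)⁻¹ H P`: if `P ⪯ P̃` and `P v = P̃ v = w`,
then `vᵀ g(P) v ≥ vᵀ g(P̃) v`. -/
theorem jump_map_kernel_comparison {n m : ℕ}
    (P Pt : Matrix (Fin n) (Fin n) ℝ) (hP : P.PosSemidef) (hPt : Pt.PosSemidef)
    (hle : (Pt - P).PosSemidef)
    (H : Matrix (Fin m) (Fin n) ℝ) (R : Matrix (Fin m) (Fin m) ℝ) (hR : R.PosDef)
    (v w : Fin n → ℝ) (hPv : P.mulVec v = w) (hPtv : Pt.mulVec v = w) :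
    v ⬝ᵥ (Pt * Hᵀ * (H * Pt * Hᵀ + R)⁻¹ * H * Pt).mulVec v ≤
      v ⬝ᵥ (P * Hᵀ * (H * P * Hᵀ + R)⁻¹ * H * P).mulVec v := by
  have hB : (H * P * Hᵀ + R).PosDef := by
    have := hP.mul_mul_conjTranspose_same H
    simp only [conjTranspose_eq_transpose_of_trivial] at this
    exact Matrix.PosDef.posSemidef_add this hR
  have hBt : (H * Pt * Hᵀ + R).PosDef := by
    have := hPt.mul_mul_conjTranspose_same H
    simp only [conjTranspose_eq_transpose_of_trivial] at this
    exact Matrix.PosDef.posSemidef_add this hR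
  have hdiff : ((H * Pt * Hᵀ + R) - (H * P * Hᵀ + R)).PosSemidef := by
    have := hle.mul_mul_conjTranspose_same H
    simp only [conjTranspose_eq_transpose_of_trivial] at this
    have heq : (H * Pt * Hᵀ + R) - (H * P * Hᵀ + R) = H * (Pt - P) * Hᵀ := by
      rw [Matrix.mul_sub, Matrix.sub_mul]; abel
    rw [heq]; exact this
  rw [quad_eq P hP.isHermitian H _ v w hPv, quad_eq Pt hPt.isHermitian H _ v w hPtv]
  exact inv_quad_antitone _ _ hB hBt hdiff (H.mulVec w)
end

section
/- Let E be a symmetric n×n matrix with E ⪯ 0, and let Z be symmetric with vᵀ Z v ≤ 0 for all v ∈ ker E. Then for all sufficiently small h > 0, the distance from E + hZ to the negative semidefinite cone is o(h); equivalently, Z lies in the (Bouligand) tangent cone to S₋ⁿ at E. -/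
open Matrix Set Asymptotics

noncomputable def frobNorm {n : ℕ} (M : Matrix (Fin n) (Fin n) ℝ) : ℝ :=
  Real.sqrt (∑ i, ∑ j, (M i j) ^ 2)

attribute [local instance] Matrix.frobeniusNormedAddCommGroup Matrix.frobeniusNormedSpace

lemma frobNorm_eq {n : ℕ} (M : Matrix (Fin n) (Fin n) ℝ) : frobNorm M = ‖M‖ := by
  rw [frobNorm, Matrix.frobenius_norm_def, Real.sqrt_eq_rpow]
  congr 1
  simp [sq_abs]

section
variable {n : ℕ} (U : Matrix (Fin n) (Fin n) ℝ)

lemma spec_real {E : Matrix (Fin n) (Fin n) ℝ} (hH : E.IsHermitian) :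
    E = (hH.eigenvectorUnitary : Matrix (Fin n) (Fin n) ℝ) * diagonal hH.eigenvalues
      * star (hH.eigenvectorUnitary : Matrix (Fin n) (Fin n) ℝ) := by
  have := hH.spectral_theorem
  rwa [RCLike.ofReal_real_eq_id, Function.id_comp] at this

lemma conj_mul' (hU : star U * U = 1) (a b : Fin n → ℝ) :
    (U * diagonal a * star U) * (U * diagonal b * star U)
      = U * diagonal (fun i => a i * b i) * star U := by
  have h : diagonal a * diagonal b = diagonal (fun i => a i * b i) := by
    rw [diagonal_mul_diagonal]
  calc (U * diagonal a * star U) * (U * diagonal b * star U)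
      = U * (diagonal a * ((star U * U) * (diagonal b * star U))) := by
        simp only [Matrix.mul_assoc]
    _ = U * diagonal (fun i => a i * b i) * star U := by
        rw [hU, one_mul, ← Matrix.mul_assoc (diagonal a), h, ← Matrix.mul_assoc]

lemma quad_form (a : Fin n → ℝ) (v : Fin n → ℝ) :
    v ⬝ᵥ (U * diagonal a * star U) *ᵥ v = ∑ i, a i * ((star U *ᵥ v) i) ^ 2 := by
  rw [← mulVec_mulVec, ← mulVec_mulVec, dotProduct_mulVec]
  have hvU : v ᵥ* U = star U *ᵥ v := by
    rw [Matrix.star_eq_conjTranspose, conjTranspose_eq_transpose_of_trivial, mulVec_transpose]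
  rw [hvU]
  simp [dotProduct, mulVec_diagonal]
  congr 1; funext i; ring

lemma conj_herm (a : Fin n → ℝ) : (U * diagonal a * star U).IsHermitian := by
  unfold Matrix.IsHermitian
  rw [conjTranspose_mul, conjTranspose_mul, diagonal_conjTranspose]
  simp [Matrix.star_eq_conjTranspose, conjTranspose_eq_transpose_of_trivial, Matrix.mul_assoc]

lemma quad_le (Z : Matrix (Fin n) (Fin n) ℝ) (w : Fin n → ℝ) :
    w ⬝ᵥ Z *ᵥ w ≤ (∑ i, ∑ j, |Z i j|) * (∑ k, (w k) ^ 2) := by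
  have hS : ∀ i, (w i) ^ 2 ≤ ∑ k, (w k) ^ 2 := fun i =>
    Finset.single_le_sum (fun k _ => sq_nonneg (w k)) (Finset.mem_univ i)
  calc w ⬝ᵥ Z *ᵥ w = ∑ i, ∑ j, w i * Z i j * w j := by
        simp [dotProduct, mulVec, Finset.mul_sum, mul_assoc]
    _ ≤ ∑ i, ∑ j, |Z i j| * (∑ k, (w k) ^ 2) := by
        apply Finset.sum_le_sum; intro i _
        apply Finset.sum_le_sum; intro j _
        have h1 : w i * Z i j * w j ≤ |Z i j| * (|w i| * |w j|) := by
          calc w i * Z i j * w j ≤ |w i * Z i j * w j| := le_abs_self _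
            _ = |Z i j| * (|w i| * |w j|) := by rw [abs_mul, abs_mul]; ring
        refine h1.trans (mul_le_mul_of_nonneg_left ?_ (abs_nonneg _))
        nlinarith [hS i, hS j, sq_abs (w i), sq_abs (w j), sq_nonneg (|w i| - |w j|)]
    _ = (∑ i, ∑ j, |Z i j|) * (∑ k, (w k) ^ 2) := by
        rw [Finset.sum_mul]; congr 1; funext i; rw [Finset.sum_mul]

lemma sandwich (M Z : Matrix (Fin n) (Fin n) ℝ) (hM : Mᵀ = M) (x : Fin n → ℝ) :
    x ⬝ᵥ (M * Z * M) *ᵥ x = (M *ᵥ x) ⬝ᵥ Z *ᵥ (M *ᵥ x) := by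
  rw [← mulVec_mulVec, ← mulVec_mulVec, dotProduct_mulVec, ← mulVec_transpose, hM]

end

set_option maxHeartbeats 2000000 in
/-- Bouligand tangent cone characterization for the NSD cone: if `E ⪯ 0` is
symmetric and `Z` is symmetric with `vᵀ Z v ≤ 0` for all `v ∈ ker E`, then the
(Frobenius) distance from `E + hZ` to the NSD cone is `o(h)` as `h → 0⁺`. -/
theorem tangent_cone_little_o {n : ℕ}
    (E Z : Matrix (Fin n) (Fin n) ℝ)
    (hE : (-E).PosSemidef) (hZ : Z.IsSymm)
    (hker : ∀ v : Fin n → ℝ, E.mulVec v = 0 → v ⬝ᵥ Z.mulVec v ≤ 0) :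
    (fun h : ℝ =>
        sInf ((fun N => frobNorm (E + h • Z - N)) ''
          {N : Matrix (Fin n) (Fin n) ℝ | (-N).PosSemidef}))
      =o[nhdsWithin 0 (Ioi 0)] (fun h => h) := by
  classical
  have hH : E.IsHermitian := by simpa using hE.1.neg
  set U : Matrix (Fin n) (Fin n) ℝ := (hH.eigenvectorUnitary : Matrix (Fin n) (Fin n) ℝ)
    with hUdef
  have hU1 : star U * U = 1 := Matrix.mem_unitaryGroup_iff'.mp hH.eigenvectorUnitary.2
  have hU2 : U * star U = 1 := Matrix.mem_unitaryGroup_iff.mp hH.eigenvectorUnitary.2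
  set d : Fin n → ℝ := hH.eigenvalues with hd
  have hspec : E = U * diagonal d * star U := spec_real hH
  -- eigenvalues are nonpositive
  have hdle : ∀ i, d i ≤ 0 := by
    intro i
    have hnn := hE.dotProduct_mulVec_nonneg (U *ᵥ Pi.single i 1)
    have hx : star (U *ᵥ Pi.single i 1) = U *ᵥ Pi.single i 1 := by
      funext j; simp
    rw [hx, neg_mulVec, dotProduct_neg] at hnn
    have hq := quad_form U d (U *ᵥ Pi.single i 1)
    rw [← hspec] at hq
    have hc : star U *ᵥ (U *ᵥ Pi.single i 1) = Pi.single i 1 := by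
      rw [mulVec_mulVec, hU1, one_mulVec]
    rw [hc] at hq
    have hsum : (∑ j, d j * ((Pi.single i 1 : Fin n → ℝ) j) ^ 2) = d i := by
      rw [Finset.sum_eq_single i]
      · simp
      · intro b _ hb; simp [Pi.single_apply, hb]
      · intro hi; exact absurd (Finset.mem_univ i) hi
    rw [hq, hsum] at hnn
    linarith
  -- selector functions and projection matrices
  set ps : Fin n → ℝ := fun i => if d i = 0 then 1 else 0 with hps
  set qs : Fin n → ℝ := fun i => if d i = 0 then 0 else 1 with hqs
  set ds : Fin n → ℝ := fun i => if d i = 0 then 0 else (d i)⁻¹ with hds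
  set P : Matrix (Fin n) (Fin n) ℝ := U * diagonal ps * star U with hP
  set Q : Matrix (Fin n) (Fin n) ℝ := U * diagonal qs * star U with hQdef
  set Ei : Matrix (Fin n) (Fin n) ℝ := U * diagonal ds * star U with hEidef
  have hPQ : P + Q = 1 := by
    rw [hP, hQdef, ← Matrix.add_mul, ← Matrix.mul_add, diagonal_add]
    have h1 : (fun i => ps i + qs i) = fun _ => (1:ℝ) := by
      funext i; by_cases h : d i = 0 <;> simp [hps, hqs, h]
    rw [h1, diagonal_one, Matrix.mul_one, hU2]
  have hEiE : Ei * E = Q := by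
    rw [hEidef, hspec, conj_mul' U hU1, hQdef]
    have h1 : (fun i => ds i * d i) = qs := by
      funext i; by_cases h : d i = 0
      · simp [hds, hqs, h]
      · simp [hds, hqs, h, inv_mul_cancel₀ h]
    rw [h1]
  have hEEi : E * Ei = Q := by
    rw [hEidef, hspec, conj_mul' U hU1, hQdef]
    have h1 : (fun i => d i * ds i) = qs := by
      funext i; by_cases h : d i = 0
      · simp [hds, hqs, h]
      · simp [hds, hqs, h, mul_inv_cancel₀ h]
    rw [h1]
  have hEP : E * P = 0 := by
    rw [hP, hspec, conj_mul' U hU1]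
    have h1 : (fun i => d i * ps i) = fun _ => (0:ℝ) := by
      funext i; by_cases h : d i = 0 <;> simp [hps, h]
    rw [h1, ← diagonal_zero]
    simp
  have hQQ : Q * Q = Q := by
    rw [hQdef, conj_mul' U hU1]
    have h1 : (fun i => qs i * qs i) = qs := by
      funext i; by_cases h : d i = 0 <;> simp [hqs, h]
    rw [h1]
  have hPherm : P.IsHermitian := conj_herm U ps
  have hQherm : Q.IsHermitian := conj_herm U qs
  have hEiherm : Ei.IsHermitian := conj_herm U ds
  have hPT : Pᵀ = P := by
    rw [← conjTranspose_eq_transpose_of_trivial]; exact hPherm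
  have hQT : Qᵀ = Q := by
    rw [← conjTranspose_eq_transpose_of_trivial]; exact hQherm
  have hZH : Zᴴ = Z := by
    rw [conjTranspose_eq_transpose_of_trivial]; exact hZ
  -- W and its transpose
  set W : Matrix (Fin n) (Fin n) ℝ := P * Z * Ei with hW
  set Wt : Matrix (Fin n) (Fin n) ℝ := Ei * Z * P with hWt
  have hWH : Wᴴ = Wt := by
    rw [hW, hWt, Matrix.conjTranspose_mul (P * Z) Ei, Matrix.conjTranspose_mul P Z,
      hZH, hPherm.eq, hEiherm.eq, ← Matrix.mul_assoc Ei Z P]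
  have hWE : W * E = P * Z * Q := by
    rw [hW, Matrix.mul_assoc (P * Z), hEiE]
  have hEWt : E * Wt = Q * Z * P := by
    rw [hWt, ← Matrix.mul_assoc E (Ei * Z) P, ← Matrix.mul_assoc E Ei Z, hEEi]
  set D : Matrix (Fin n) (Fin n) ℝ := P * Z * P + Q * Z * Q with hD
  have hDherm : D.IsHermitian := by
    unfold Matrix.IsHermitian
    rw [hD, conjTranspose_add, Matrix.conjTranspose_mul (P * Z) P, Matrix.conjTranspose_mul P Z,
      Matrix.conjTranspose_mul (Q * Z) Q, Matrix.conjTranspose_mul Q Z,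
      hZH, hPherm.eq, hQherm.eq, ← Matrix.mul_assoc P Z P, ← Matrix.mul_assoc Q Z Q]
  have hZdec : Z = D + W * E + E * Wt := by
    have h1 : Z = (P + Q) * Z * (P + Q) := by rw [hPQ, Matrix.one_mul, Matrix.mul_one]
    rw [hD, hWE, hEWt]
    conv_lhs => rw [h1]
    simp only [Matrix.add_mul, Matrix.mul_add]
    abel
  -- constants
  set CZ : ℝ := ∑ i, ∑ j, |Z i j| with hCZ
  have hCZ0 : 0 ≤ CZ :=
    Finset.sum_nonneg fun i _ => Finset.sum_nonneg fun j _ => abs_nonneg _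
  set g : Fin n → ℝ := fun i => if d i = 0 then 1 else -d i / (CZ + 1) with hg
  have hgpos : ∀ i, 0 < g i := by
    intro i; by_cases h : d i = 0
    · simp [hg, h]
    · have hneg : d i < 0 := lt_of_le_of_ne (hdle i) h
      simp only [hg, h, if_false]
      exact div_pos (by linarith) (by linarith)
  set T : Finset ℝ := insert 1 (Finset.univ.image g) with hT
  have hTne : T.Nonempty := ⟨1, Finset.mem_insert_self _ _⟩
  set h₀ : ℝ := T.min' hTne with hh₀
  have hh₀pos : 0 < h₀ := by
    have hm : h₀ ∈ T := T.min'_mem hTne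
    rcases Finset.mem_insert.mp (by rwa [hT] at hm) with h | h
    · rw [h]; norm_num
    · obtain ⟨i, _, hi⟩ := Finset.mem_image.mp h
      rw [← hi]; exact hgpos i
  have hh₀le1 : h₀ ≤ 1 := Finset.min'_le _ _ (Finset.mem_insert_self _ _)
  have hh₀g : ∀ i, h₀ ≤ g i := fun i =>
    Finset.min'_le _ _ (Finset.mem_insert_of_mem (Finset.mem_image_of_mem g (Finset.mem_univ i)))
  have hqs0 : ∀ i, 0 ≤ qs i := by
    intro i; by_cases h : d i = 0 <;> simp [hqs, h]
  have hcoef : ∀ i, d i + h₀ * CZ * qs i ≤ 0 := by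
    intro i; by_cases h : d i = 0
    · simp [hqs, h]
    · have h1 : h₀ ≤ -d i / (CZ + 1) := by
        simpa [hg, h] using hh₀g i
      have hdneg : d i < 0 := lt_of_le_of_ne (hdle i) h
      have h2 : h₀ * CZ ≤ (-d i / (CZ + 1)) * CZ :=
        mul_le_mul_of_nonneg_right h1 hCZ0
      have h3 : (-d i / (CZ + 1)) * CZ ≤ -d i := by
        rw [div_mul_eq_mul_div, div_le_iff₀ (by linarith)]
        nlinarith
      simp only [hqs, h, if_false, mul_one]
      linarith
  -- E + h • D is negative semidefinite for small h
  have hNSD : ∀ h : ℝ, 0 < h → h ≤ h₀ → (-(E + h • D)).PosSemidef := by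
    intro h hh hhle
    refine posSemidef_iff_dotProduct_mulVec.mpr ⟨?_, ?_⟩
    · unfold Matrix.IsHermitian
      rw [conjTranspose_neg, conjTranspose_add, conjTranspose_smul, hH.eq, hDherm.eq]
      simp
    · intro x
      have hx : star x = x := by funext j; simp
      rw [hx, neg_mulVec, dotProduct_neg, le_neg, neg_zero]
      rw [add_mulVec, smul_mulVec, dotProduct_add, dotProduct_smul, smul_eq_mul]
      set c : Fin n → ℝ := star U *ᵥ x with hc
      have hEq : x ⬝ᵥ E *ᵥ x = ∑ i, d i * (c i) ^ 2 := by
        rw [hspec]; exact quad_form U d x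
      have hDsplit : x ⬝ᵥ D *ᵥ x = x ⬝ᵥ (P * Z * P) *ᵥ x + x ⬝ᵥ (Q * Z * Q) *ᵥ x := by
        rw [hD, add_mulVec, dotProduct_add]
      have hPpart : x ⬝ᵥ (P * Z * P) *ᵥ x ≤ 0 := by
        rw [sandwich P Z hPT x]
        apply hker
        rw [mulVec_mulVec, hEP, zero_mulVec]
      have hQpart : x ⬝ᵥ (Q * Z * Q) *ᵥ x ≤ CZ * ∑ i, qs i * (c i) ^ 2 := by
        rw [sandwich Q Z hQT x]
        refine (quad_le Z (Q *ᵥ x)).trans ?_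
        rw [← hCZ]
        apply mul_le_mul_of_nonneg_left _ hCZ0
        have hqq : (∑ k, ((Q *ᵥ x) k) ^ 2) = x ⬝ᵥ Q *ᵥ x := by
          calc (∑ k, ((Q *ᵥ x) k) ^ 2) = (Q *ᵥ x) ⬝ᵥ (Q *ᵥ x) := by
                simp [dotProduct, sq]
            _ = x ⬝ᵥ (Q * Q) *ᵥ x := by
                rw [← Matrix.mulVec_mulVec x Q Q, Matrix.dotProduct_mulVec x Q (Q *ᵥ x),
                  ← Matrix.mulVec_transpose Q x, hQT]
            _ = x ⬝ᵥ Q *ᵥ x := by rw [hQQ]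
        rw [hqq, hQdef, quad_form U qs x, ← hc]
      have hkey : (∑ i, d i * (c i) ^ 2) + h * (CZ * ∑ i, qs i * (c i) ^ 2) ≤ 0 := by
        have hterm : ∀ i ∈ Finset.univ, d i * (c i) ^ 2 + h * (CZ * (qs i * (c i) ^ 2)) ≤ 0 := by
          intro i _
          have hc1 := hcoef i
          have hq1 := hqs0 i
          nlinarith [sq_nonneg (c i), mul_nonneg (mul_nonneg hCZ0 hq1) (sq_nonneg (c i)),
            mul_le_mul_of_nonneg_right hhle (mul_nonneg (mul_nonneg hCZ0 hq1) (sq_nonneg (c i)))]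
        calc (∑ i, d i * (c i) ^ 2) + h * (CZ * ∑ i, qs i * (c i) ^ 2)
            = ∑ i, (d i * (c i) ^ 2 + h * (CZ * (qs i * (c i) ^ 2))) := by
              rw [Finset.sum_add_distrib, Finset.mul_sum, Finset.mul_sum]
          _ ≤ 0 := Finset.sum_nonpos hterm
      rw [hEq, hDsplit]
      have := mul_le_mul_of_nonneg_left hQpart hh.le
      have hP0 : h * (x ⬝ᵥ (P * Z * P) *ᵥ x) ≤ 0 :=
        mul_nonpos_of_nonneg_of_nonpos hh.le hPpart
      nlinarith [hkey]
  -- the approximating family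
  set Nf : ℝ → Matrix (Fin n) (Fin n) ℝ :=
    fun h => (1 + h • W) * (E + h • D) * (1 + h • Wt) with hNf
  have hNfmem : ∀ h : ℝ, 0 < h → h ≤ h₀ → (-(Nf h)).PosSemidef := by
    intro h hh hle
    have h1 : (1 + h • W)ᴴ = 1 + h • Wt := by
      rw [conjTranspose_add, conjTranspose_smul, hWH, conjTranspose_one]
      simp
    have h2 := (hNSD h hh hle).mul_mul_conjTranspose_same (1 + h • W)
    rw [h1] at h2
    convert h2 using 1
    rw [hNf]
    simp only [Matrix.mul_neg, Matrix.neg_mul]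
  -- remainder
  set R1 : Matrix (Fin n) (Fin n) ℝ := W * D + D * Wt + W * E * Wt with hR1
  set R2 : Matrix (Fin n) (Fin n) ℝ := W * D * Wt with hR2
  have hrem : ∀ h : ℝ, E + h • Z - Nf h = -(h ^ 2 • R1 + h ^ 3 • R2) := by
    intro h
    rw [hNf, hR1, hR2]
    conv_lhs => rw [hZdec]
    simp only [Matrix.mul_add, Matrix.add_mul, Matrix.one_mul, Matrix.mul_one,
      Matrix.smul_mul, Matrix.mul_smul, smul_add, smul_smul, Matrix.mul_assoc]
    module
  set Cc : ℝ := ‖R1‖ + ‖R2‖ with hCc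
  have hCc0 : 0 ≤ Cc := add_nonneg (norm_nonneg _) (norm_nonneg _)
  have hbound : ∀ h : ℝ, 0 < h → h ≤ 1 →
      frobNorm (E + h • Z - Nf h) ≤ Cc * h ^ 2 := by
    intro h h1 h3
    rw [frobNorm_eq, hrem h, norm_neg]
    have hh2 : ‖(h:ℝ) ^ 2 • R1 + h ^ 3 • R2‖ ≤ h ^ 2 * ‖R1‖ + h ^ 3 * ‖R2‖ := by
      refine (norm_add_le _ _).trans ?_
      rw [norm_smul, norm_smul]
      simp [abs_of_pos h1, abs_of_pos (pow_pos h1 2), abs_of_pos (pow_pos h1 3),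
        Real.norm_eq_abs]
    refine hh2.trans ?_
    have : h ^ 3 ≤ h ^ 2 := pow_le_pow_of_le_one h1.le h3 (by norm_num)
    rw [hCc]
    nlinarith [norm_nonneg R1, norm_nonneg R2, pow_pos h1 2]
  -- assemble the little-o statement
  rw [isLittleO_iff]
  intro ε hε
  have hδpos : 0 < min (min h₀ 1) (ε / (Cc + 1)) := by
    refine lt_min (lt_min hh₀pos one_pos) ?_
    positivity
  have hmem : Ioo (0:ℝ) (min (min h₀ 1) (ε / (Cc + 1))) ∈ nhdsWithin 0 (Ioi 0) :=
    Ioo_mem_nhdsGT_of_mem ⟨le_refl 0, hδpos⟩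
  filter_upwards [hmem] with h hh
  obtain ⟨hh1, hh2⟩ := hh
  have hhh₀ : h ≤ h₀ := le_of_lt (lt_of_lt_of_le hh2 ((min_le_left _ _).trans (min_le_left _ _)))
  have hh1' : h ≤ 1 := le_of_lt (lt_of_lt_of_le hh2 ((min_le_left _ _).trans (min_le_right _ _)))
  have hhε : h ≤ ε / (Cc + 1) := le_of_lt (lt_of_lt_of_le hh2 (min_le_right _ _))
  set S : Set ℝ := ((fun N => frobNorm (E + h • Z - N)) ''
      {N : Matrix (Fin n) (Fin n) ℝ | (-N).PosSemidef}) with hS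
  have hmemN : frobNorm (E + h • Z - Nf h) ∈ S :=
    ⟨Nf h, hNfmem h hh1 hhh₀, rfl⟩
  have hbdd : BddBelow S := by
    refine ⟨0, fun y hy => ?_⟩
    obtain ⟨M, _, rfl⟩ := hy
    exact Real.sqrt_nonneg _
  have h0le : 0 ≤ sInf S := by
    refine le_csInf ⟨_, hmemN⟩ fun y hy => ?_
    obtain ⟨M, _, rfl⟩ := hy
    exact Real.sqrt_nonneg _
  have hle : sInf S ≤ Cc * h ^ 2 :=
    (csInf_le hbdd hmemN).trans (hbound h hh1 hh1')
  rw [Real.norm_eq_abs, Real.norm_eq_abs, abs_of_nonneg h0le, abs_of_pos hh1]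
  have h4 : Cc * h ^ 2 ≤ ε * h := by
    have h5 : h * (Cc + 1) ≤ ε := by
      rw [← le_div_iff₀ (by positivity)]
      exact hhε
    nlinarith
  linarith
end

section
/- Let A be an n×n matrix, Q ⪰ 0 symmetric, S : [0,T] → symmetric PSD matrices continuous, and let Ỹ, Ȳ : [0,T] → symmetric positive definite matrices be C¹ solutions of d/dt Ỹ = −ỸA − AᵀỸ − ỸQỸ + S(t) and d/dt Ȳ = −ȲA − AᵀȲ − ȲQȲ + S(t) − Δ(t), where Δ : [0,T] → symmetric PSD matrices is continuous, with Ỹ(0) = Ȳ(0). Then Ỹ(t) ⪰ Ȳ(t) for all t ∈ [0,T]. -/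
open Matrix Set Filter Topology

section helpers
variable {n : ℕ}

lemma herm_transpose {M : Matrix (Fin n) (Fin n) ℝ} (h : M.IsHermitian) : Mᵀ = M := by
  simpa [Matrix.conjTranspose_eq_transpose_of_trivial] using h.eq

lemma quad_sym {M : Matrix (Fin n) (Fin n) ℝ} (hM : Mᵀ = M) (x y : Fin n → ℝ) :
    x ⬝ᵥ M *ᵥ y = (M *ᵥ x) ⬝ᵥ y := by
  rw [dotProduct_mulVec, ← vecMul_transpose, hM]

lemma psd_kernel {M : Matrix (Fin n) (Fin n) ℝ} (hM : M.PosSemidef) {x : Fin n → ℝ}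
    (hx : x ⬝ᵥ M *ᵥ x = 0) : M *ᵥ x = 0 := by
  exact (hM.dotProduct_mulVec_zero_iff x).mp (by simpa using hx)

lemma quad_abs_le {M : Matrix (Fin n) (Fin n) ℝ} {x : Fin n → ℝ} (hx : ∀ i, |x i| ≤ 1) :
    |x ⬝ᵥ M *ᵥ x| ≤ ∑ i, ∑ j, |M i j| := by
  simp only [dotProduct, mulVec]
  calc |∑ i, x i * ∑ j, M i j * x j| ≤ ∑ i, |x i * ∑ j, M i j * x j| :=
        Finset.abs_sum_le_sum_abs _ _
    _ ≤ ∑ i, ∑ j, |M i j| := by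
        apply Finset.sum_le_sum
        intro i _
        rw [abs_mul]
        calc |x i| * |∑ j, M i j * x j| ≤ 1 * |∑ j, M i j * x j| :=
              mul_le_mul_of_nonneg_right (hx i) (abs_nonneg _)
          _ = |∑ j, M i j * x j| := one_mul _
          _ ≤ ∑ j, |M i j * x j| := Finset.abs_sum_le_sum_abs _ _
          _ ≤ ∑ j, |M i j| := by
              apply Finset.sum_le_sum
              intro j _
              rw [abs_mul]
              calc |M i j| * |x j| ≤ |M i j| * 1 :=
                    mul_le_mul_of_nonneg_left (hx j) (abs_nonneg _)
                _ = |M i j| := mul_one _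

lemma quad_mul_left {M N : Matrix (Fin n) (Fin n) ℝ} {x : Fin n → ℝ} {c : ℝ}
    (hM : Mᵀ = M) (hx : M *ᵥ x = c • x) :
    x ⬝ᵥ (M * N) *ᵥ x = c * (x ⬝ᵥ N *ᵥ x) := by
  rw [← mulVec_mulVec, quad_sym hM, hx, smul_dotProduct, smul_eq_mul]

lemma quad_mul_right {M N : Matrix (Fin n) (Fin n) ℝ} {x : Fin n → ℝ} {c : ℝ}
    (hx : M *ᵥ x = c • x) :
    x ⬝ᵥ (N * M) *ᵥ x = c * (x ⬝ᵥ N *ᵥ x) := by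
  rw [← mulVec_mulVec, hx, mulVec_smul, dotProduct_smul, smul_eq_mul]

lemma quad_transpose (M : Matrix (Fin n) (Fin n) ℝ) (x : Fin n → ℝ) :
    x ⬝ᵥ Mᵀ *ᵥ x = x ⬝ᵥ M *ᵥ x := by
  rw [mulVec_transpose, dotProduct_mulVec, dotProduct_comm]

lemma dot_self_nonneg (x : Fin n → ℝ) : 0 ≤ x ⬝ᵥ x :=
  Finset.sum_nonneg fun i _ => mul_self_nonneg _

lemma star_eq_self (x : Fin n → ℝ) : star x = x := by
  funext i; simp

lemma unit_abs_le {x : Fin n → ℝ} (hx : x ⬝ᵥ x = 1) (i : Fin n) : |x i| ≤ 1 := by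
  have h1 : x i * x i ≤ ∑ j, x j * x j :=
    Finset.single_le_sum (f := fun j => x j * x j) (fun j _ => mul_self_nonneg _)
      (Finset.mem_univ i)
  have h2 : x i * x i ≤ 1 := by
    have : (∑ j, x j * x j) = 1 := by simpa [dotProduct] using hx
    linarith [h1, this.le, this.ge]
  nlinarith [abs_mul_abs_self (x i), abs_nonneg (x i)]

lemma quad_continuous (M : Matrix (Fin n) (Fin n) ℝ) :
    Continuous fun x : Fin n → ℝ => x ⬝ᵥ M *ᵥ x := by
  simp only [dotProduct, mulVec]
  exact continuous_finset_sum _ fun i _ =>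
    (continuous_apply i).mul (continuous_finset_sum _ fun j _ =>
      (continuous_const.mul (continuous_apply j)))

end helpers

/-- Information-form surrogate optimism: dropping the PSD Jensen-gap term `Δ` from
the Riccati-type information ODE yields an upper bound in the Loewner order.
If `Ỹ' = −ỸA − AᵀỸ − ỸQỸ + S` and `Ȳ' = −ȲA − AᵀȲ − ȲQȲ + S − Δ` with
`Ỹ(0) = Ȳ(0)`, `Q ⪰ 0`, `Δ(t) ⪰ 0`, then `Ỹ(t) ⪰ Ȳ(t)` on `[0,T]`. -/
theorem info_surrogate_optimism {n : ℕ} (T : ℝ) (hT : 0 ≤ T)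
    (A Q : Matrix (Fin n) (Fin n) ℝ) (hQ : Q.PosSemidef)
    (S Δ Yt Ybar : ℝ → Matrix (Fin n) (Fin n) ℝ)
    (hScont : ∀ i j, ContinuousOn (fun t => S t i j) (Icc 0 T))
    (hΔcont : ∀ i j, ContinuousOn (fun t => Δ t i j) (Icc 0 T))
    (hSpsd : ∀ t ∈ Icc 0 T, (S t).PosSemidef)
    (hΔpsd : ∀ t ∈ Icc 0 T, (Δ t).PosSemidef)
    (hYtpd : ∀ t ∈ Icc 0 T, (Yt t).PosDef)
    (hYbarpd : ∀ t ∈ Icc 0 T, (Ybar t).PosDef)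
    (hYtode : ∀ t ∈ Icc 0 T, ∀ i j,
      HasDerivWithinAt (fun s => Yt s i j)
        ((-(Yt t * A) - Aᵀ * Yt t - Yt t * Q * Yt t + S t) i j) (Icc 0 T) t)
    (hYbarode : ∀ t ∈ Icc 0 T, ∀ i j,
      HasDerivWithinAt (fun s => Ybar s i j)
        ((-(Ybar t * A) - Aᵀ * Ybar t - Ybar t * Q * Ybar t + S t - Δ t) i j)
        (Icc 0 T) t)
    (hinit : Yt 0 = Ybar 0) :
    ∀ t ∈ Icc 0 T, (Yt t - Ybar t).PosSemidef := by
  set E : ℝ → Matrix (Fin n) (Fin n) ℝ := fun t => Yt t - Ybar t with hEdef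
  set D : ℝ → Matrix (Fin n) (Fin n) ℝ := fun t =>
    (-(Yt t * A) - Aᵀ * Yt t - Yt t * Q * Yt t + S t) -
      (-(Ybar t * A) - Aᵀ * Ybar t - Ybar t * Q * Ybar t + S t - Δ t) with hDdef
  have hEderiv : ∀ t ∈ Icc 0 T, ∀ i j,
      HasDerivWithinAt (fun s => E s i j) (D t i j) (Icc 0 T) t := by
    intro t ht i j
    have := (hYtode t ht i j).sub (hYbarode t ht i j)
    simpa [E, D, Matrix.sub_apply, Pi.sub_def] using this
  have hEcont : ∀ i j, ContinuousOn (fun t => E t i j) (Icc 0 T) :=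
    fun i j t ht => (hEderiv t ht i j).continuousWithinAt
  have hYtcont : ∀ i j, ContinuousOn (fun t => Yt t i j) (Icc 0 T) :=
    fun i j t ht => (hYtode t ht i j).continuousWithinAt
  have hYbarcont : ∀ i j, ContinuousOn (fun t => Ybar t i j) (Icc 0 T) :=
    fun i j t ht => (hYbarode t ht i j).continuousWithinAt
  have hEtr : ∀ t ∈ Icc 0 T, (E t)ᵀ = E t := by
    intro t ht
    simp only [E, transpose_sub]
    rw [herm_transpose (hYtpd t ht).1, herm_transpose (hYbarpd t ht).1]
  have hE0 : E 0 = 0 := by simp [E, hinit]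
  -- the bound function
  set γ : ℝ → ℝ := fun t =>
    2 * (∑ i, ∑ j, |A i j|) + (∑ i, ∑ j, |(Q * Yt t) i j|) + (∑ i, ∑ j, |(Ybar t * Q) i j|)
    with hγdef
  have hγcont : ContinuousOn γ (Icc 0 T) := by
    apply ContinuousOn.add
    apply ContinuousOn.add continuousOn_const
    · apply continuousOn_finset_sum
      intro i _
      apply continuousOn_finset_sum
      intro j _
      have : ContinuousOn (fun t => (Q * Yt t) i j) (Icc 0 T) := by
        simp only [Matrix.mul_apply]
        exact continuousOn_finset_sum _ fun k _ => continuousOn_const.mul (hYtcont k j)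
      exact this.abs
    · apply continuousOn_finset_sum
      intro i _
      apply continuousOn_finset_sum
      intro j _
      have : ContinuousOn (fun t => (Ybar t * Q) i j) (Icc 0 T) := by
        simp only [Matrix.mul_apply]
        exact continuousOn_finset_sum _ fun k _ => (hYbarcont i k).mul continuousOn_const
      exact this.abs
  obtain ⟨t₀, ht₀, hmax⟩ := isCompact_Icc.exists_isMaxOn (nonempty_Icc.mpr hT) hγcont
  set K : ℝ := γ t₀ + 1 with hKdef
  have hγK : ∀ t ∈ Icc 0 T, γ t ≤ K - 1 := by
    intro t ht
    have h : γ t ≤ γ t₀ := hmax ht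
    simp only [hKdef]
    linarith
  -- key ε-perturbed statement
  have key : ∀ ε : ℝ, 0 < ε → ∀ t ∈ Icc 0 T, ∀ x : Fin n → ℝ,
      0 ≤ x ⬝ᵥ E t *ᵥ x + ε * Real.exp (K * t) * (x ⬝ᵥ x) := by
    intro ε hε
    set Eε : ℝ → Matrix (Fin n) (Fin n) ℝ :=
      fun t => E t + (ε * Real.exp (K * t)) • (1 : Matrix (Fin n) (Fin n) ℝ) with hEεdef
    have hquadEε : ∀ t (x : Fin n → ℝ), x ⬝ᵥ Eε t *ᵥ x
        = x ⬝ᵥ E t *ᵥ x + ε * Real.exp (K * t) * (x ⬝ᵥ x) := by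
      intro t x
      simp only [Eε, add_mulVec, smul_mulVec, one_mulVec, dotProduct_add,
        dotProduct_smul, smul_eq_mul]
    by_contra hcon
    push_neg at hcon
    obtain ⟨t₁, ht₁, x₁, hx₁⟩ := hcon
    have hx₁' : x₁ ⬝ᵥ Eε t₁ *ᵥ x₁ < 0 := by rw [hquadEε]; linarith
    have hx₁0 : x₁ ≠ 0 := by
      rintro rfl
      simp [dotProduct] at hx₁'
    set C : Set ℝ := {t | t ∈ Icc 0 T ∧ ∃ x : Fin n → ℝ, x ⬝ᵥ Eε t *ᵥ x < 0} with hCdef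
    have hCne : C.Nonempty := ⟨t₁, ht₁, x₁, hx₁'⟩
    have hCbdd : BddBelow C := ⟨0, fun t ht => ht.1.1⟩
    set ts : ℝ := sInf C with htsdef
    have htsIcc : ts ∈ Icc 0 T :=
      ⟨le_csInf hCne fun t ht => ht.1.1,
        csInf_le_of_le hCbdd hCne.choose_spec hCne.choose_spec.1.2⟩
    have h0C : (0 : ℝ) ∉ C := by
      rintro ⟨-, x, hx⟩
      rw [hquadEε, hE0] at hx
      have h1 : 0 ≤ ε * Real.exp (K * 0) * (x ⬝ᵥ x) :=
        mul_nonneg (mul_nonneg hε.le (Real.exp_nonneg _)) (dot_self_nonneg x)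
      simp only [Matrix.zero_mulVec, dotProduct_zero] at hx
      linarith
    -- continuity of quadratic form in t
    have hEεcont : ∀ i j, ContinuousOn (fun t => Eε t i j) (Icc 0 T) := by
      intro i j
      have h2 : ContinuousOn (fun t => ε * Real.exp (K * t) *
          (1 : Matrix (Fin n) (Fin n) ℝ) i j) (Icc 0 T) :=
        (continuousOn_const.mul
          ((Real.continuous_exp.comp (continuous_const.mul continuous_id)).continuousOn)).mul
          continuousOn_const
      have := (hEcont i j).add h2
      refine this.congr ?_
      intro t _
      simp [Eε, Matrix.add_apply, Matrix.smul_apply, smul_eq_mul]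
    have hquadcontt : ∀ x : Fin n → ℝ, ContinuousOn (fun t => x ⬝ᵥ Eε t *ᵥ x) (Icc 0 T) := by
      intro x
      simp only [dotProduct, mulVec]
      exact continuousOn_finset_sum _ fun i _ => continuousOn_const.mul
        (continuousOn_finset_sum _ fun j _ => (hEεcont i j).mul continuousOn_const)
    -- ts is not in C (quadratic form at ts is nonnegative)
    have hqts : ∀ x : Fin n → ℝ, 0 ≤ x ⬝ᵥ Eε ts *ᵥ x := by
      by_contra hq
      push_neg at hq
      obtain ⟨x, hx⟩ := hq
      have htsC : ts ∈ C := ⟨htsIcc, x, hx⟩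
      have hts0 : ts ≠ 0 := fun h => h0C (h ▸ htsC)
      have htspos : 0 < ts := lt_of_le_of_ne htsIcc.1 (Ne.symm hts0)
      have hev : ∀ᶠ s in 𝓝[Icc 0 T] ts, x ⬝ᵥ Eε s *ᵥ x < 0 := by
        have h1 := (hquadcontt x ts htsIcc)
        exact h1.eventually_lt_const hx
      have hIcosub : Ico 0 ts ⊆ Icc 0 T := fun s hs => ⟨hs.1, hs.2.le.trans htsIcc.2⟩
      have hne : (𝓝[Ico 0 ts] ts).NeBot := by
        rw [← mem_closure_iff_nhdsWithin_neBot, closure_Ico hts0.symm]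
        exact right_mem_Icc.mpr htsIcc.1
      have hev2 : ∀ᶠ s in 𝓝[Ico 0 ts] ts, x ⬝ᵥ Eε s *ᵥ x < 0 :=
        hev.filter_mono (nhdsWithin_mono _ hIcosub)
      obtain ⟨s, hslt, hsmem⟩ := (hev2.and eventually_mem_nhdsWithin).exists
      have hsC : s ∈ C := ⟨hIcosub hsmem, x, hslt⟩
      exact absurd (csInf_le hCbdd hsC) (not_le.mpr hsmem.2)
    -- the unit sphere
    set sph : Set (Fin n → ℝ) := {x | x ⬝ᵥ x = 1} with hsphdef
    have hdotc : Continuous fun x : Fin n → ℝ => x ⬝ᵥ x := by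
      simp only [dotProduct]
      exact continuous_finset_sum _ fun i _ => (continuous_apply i).mul (continuous_apply i)
    have hsphcompact : IsCompact sph := by
      apply Metric.isCompact_of_isClosed_isBounded
      · exact isClosed_eq hdotc continuous_const
      · apply (Metric.isBounded_closedBall (x := (0 : Fin n → ℝ)) (r := 1)).subset
        intro x hx
        simp only [Metric.mem_closedBall, dist_zero_right]
        rw [pi_norm_le_iff_of_nonneg zero_le_one]
        intro i
        simpa [Real.norm_eq_abs] using unit_abs_le hx i
    have hsphne : sph.Nonempty := by
      obtain ⟨i, hi⟩ : ∃ i, x₁ i ≠ 0 := by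
        by_contra hc
        push_neg at hc
        exact hx₁0 (funext hc)
      refine ⟨Pi.single i 1, ?_⟩
      simp [hsphdef, dotProduct_single]
    obtain ⟨xs, hxs_sph, hxs_min⟩ :=
      hsphcompact.exists_isMinOn hsphne (quad_continuous (Eε ts)).continuousOn
    have hxs_unit : xs ⬝ᵥ xs = 1 := hxs_sph
    set m : ℝ := xs ⬝ᵥ Eε ts *ᵥ xs with hmdef
    have hm0 : 0 ≤ m := hqts xs
    -- show m = 0
    have hmzero : m = 0 := by
      by_contra hm
      have hmpos : 0 < m := lt_of_le_of_ne hm0 (Ne.symm hm)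
      -- entrywise deviation function
      set h : ℝ → ℝ := fun t => ∑ i, ∑ j, |Eε t i j - Eε ts i j| with hhdef
      have hhcont : ContinuousOn h (Icc 0 T) :=
        continuousOn_finset_sum _ fun i _ => continuousOn_finset_sum _ fun j _ =>
          ((hEεcont i j).sub continuousOn_const).abs
      have hhts : h ts = 0 := by simp [hhdef]
      have hev : ∀ᶠ s in 𝓝[Icc 0 T] ts, h s < m := by
        have h1 := hhcont ts htsIcc
        have := h1.eventually_lt_const (by rw [hhts]; exact hmpos)
        exact this
      rw [Filter.eventually_iff, Metric.mem_nhdsWithin_iff] at hev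
      obtain ⟨δ, hδpos, hδ⟩ := hev
      obtain ⟨c, hcC, hclt⟩ := (csInf_lt_iff hCbdd hCne).mp
        (show sInf C < ts + δ by rw [← htsdef]; linarith)
      have hcge : ts ≤ c := csInf_le hCbdd hcC
      have hcIcc : c ∈ Icc 0 T := hcC.1
      have hcdist : dist c ts < δ := by
        rw [Real.dist_eq, abs_of_nonneg (by linarith)]
        linarith
      have hhc : h c < m := hδ ⟨Metric.mem_ball.mpr hcdist, hcIcc⟩
      -- show Eε c has nonnegative quadratic form, contradicting c ∈ C
      obtain ⟨x, hx⟩ := hcC.2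
      have hx0 : x ≠ 0 := by
        rintro rfl
        simp [dotProduct] at hx
      have hxx_pos : 0 < x ⬝ᵥ x :=
        lt_of_le_of_ne (dot_self_nonneg x) (fun hh => hx0 (dotProduct_self_eq_zero.mp hh.symm))
      set r : ℝ := Real.sqrt (x ⬝ᵥ x) with hrdef
      have hrpos : 0 < r := Real.sqrt_pos.mpr hxx_pos
      set u : (Fin n) → ℝ := r⁻¹ • x with hudef
      have hu_unit : u ⬝ᵥ u = 1 := by
        have hrr : r * r = x ⬝ᵥ x := Real.mul_self_sqrt hxx_pos.le
        simp only [hudef, smul_dotProduct, dotProduct_smul, smul_eq_mul]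
        rw [← hrr]
        field_simp
      have hu_quad_c : u ⬝ᵥ Eε c *ᵥ u = (r⁻¹ * r⁻¹) * (x ⬝ᵥ Eε c *ᵥ x) := by
        simp only [hudef, smul_dotProduct, dotProduct_smul, smul_eq_mul, mulVec_smul]
        ring
      have hu_quad_c_neg : u ⬝ᵥ Eε c *ᵥ u < 0 := by
        rw [hu_quad_c]
        have : 0 < r⁻¹ * r⁻¹ := mul_pos (inv_pos.mpr hrpos) (inv_pos.mpr hrpos)
        exact mul_neg_of_pos_of_neg this hx
      have hu_min : m ≤ u ⬝ᵥ Eε ts *ᵥ u := hxs_min hu_unit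
      have hdiff : |u ⬝ᵥ Eε c *ᵥ u - u ⬝ᵥ Eε ts *ᵥ u| ≤ h c := by
        have h1 : u ⬝ᵥ Eε c *ᵥ u - u ⬝ᵥ Eε ts *ᵥ u = u ⬝ᵥ (Eε c - Eε ts) *ᵥ u := by
          rw [sub_mulVec, dotProduct_sub]
        rw [h1]
        exact quad_abs_le (unit_abs_le hu_unit)
      have := abs_le.mp hdiff
      linarith [this.1, hu_min, hu_quad_c_neg, hhc]
    -- kernel vector at ts
    have hEεherm : (Eε ts).IsHermitian := by
      show (Eε ts)ᴴ = Eε ts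
      rw [conjTranspose_eq_transpose_of_trivial]
      simp only [Eε, transpose_add, transpose_smul, transpose_one]
      rw [hEtr ts htsIcc]
    have hEεpsd : (Eε ts).PosSemidef := by
      refine .of_dotProduct_mulVec_nonneg hEεherm fun x => ?_
      rw [star_eq_self]
      exact hqts x
    have hker : Eε ts *ᵥ xs = 0 := psd_kernel hEεpsd (by rw [← hmdef]; exact hmzero)
    set c' : ℝ := ε * Real.exp (K * ts) with hc'def
    have hc'pos : 0 < c' := mul_pos hε (Real.exp_pos _)
    have hExs : E ts *ᵥ xs = (-c') • xs := by
      have h1 : E ts *ᵥ xs + c' • xs = 0 := by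
        have := hker
        simp only [Eε, add_mulVec, smul_mulVec, one_mulVec] at this
        exact this
      have := eq_neg_of_add_eq_zero_left h1
      rw [this, neg_smul]
    -- ts > 0
    have htspos : 0 < ts := by
      rcases eq_or_lt_of_le htsIcc.1 with heq | h
      · exfalso
        have : m = ε := by
          rw [hmdef, hquadEε, ← heq, hE0]
          simp [hxs_unit]
        rw [hmzero] at this
        exact absurd this.symm (ne_of_gt hε)
      · exact h
    -- the scalar function g and its derivative at ts
    set g : ℝ → ℝ := fun t => xs ⬝ᵥ E t *ᵥ xs + ε * Real.exp (K * t) * (xs ⬝ᵥ xs) with hgdef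
    have hgEε : ∀ t, g t = xs ⬝ᵥ Eε t *ᵥ xs := fun t => (hquadEε t xs).symm
    have hgts : g ts = 0 := by rw [hgEε, ← hmdef, hmzero]
    have hglow : ∀ s ∈ Ico 0 ts, 0 ≤ g s := by
      intro s hs
      have hsIcc : s ∈ Icc 0 T := ⟨hs.1, hs.2.le.trans htsIcc.2⟩
      by_contra hneg
      push_neg at hneg
      have hsC : s ∈ C := ⟨hsIcc, xs, by rw [← hgEε]; exact hneg⟩
      exact absurd (csInf_le hCbdd hsC) (not_le.mpr hs.2)
    have hgderiv : HasDerivWithinAt g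
        (xs ⬝ᵥ D ts *ᵥ xs + ε * (Real.exp (K * ts) * K) * (xs ⬝ᵥ xs)) (Icc 0 T) ts := by
      apply HasDerivWithinAt.add
      · have hsum : HasDerivWithinAt (fun t => ∑ i, xs i * ∑ j, E t i j * xs j)
            (∑ i, xs i * ∑ j, D ts i j * xs j) (Icc 0 T) ts := by
          apply HasDerivWithinAt.fun_sum
          intro i _
          exact ((HasDerivWithinAt.fun_sum (fun j _ =>
            (hEderiv ts htsIcc i j).mul_const (xs j))).const_mul (xs i))
        have heq1 : (fun t => xs ⬝ᵥ E t *ᵥ xs) = fun t => ∑ i, xs i * ∑ j, E t i j * xs j := by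
          funext t
          simp [dotProduct, mulVec]
        have heq2 : xs ⬝ᵥ D ts *ᵥ xs = ∑ i, xs i * ∑ j, D ts i j * xs j := by
          simp [dotProduct, mulVec]
        rw [heq1, heq2]
        exact hsum
      · have hKt : HasDerivAt (fun t : ℝ => K * t) K ts := by
          simpa using (hasDerivAt_id ts).const_mul K
        have hexp : HasDerivAt (fun t => Real.exp (K * t)) (Real.exp (K * ts) * K) ts := hKt.exp
        exact (((hexp.const_mul ε).mul_const (xs ⬝ᵥ xs)).hasDerivWithinAt)
    -- the value of the quadratic form of D at xs
    have hDident : D ts = -(E ts * A) - Aᵀ * E ts -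
        (E ts * (Q * Yt ts) + (Ybar ts * Q) * E ts) + Δ ts := by
      simp only [D, E]
      noncomm_ring
    have hquadD : xs ⬝ᵥ D ts *ᵥ xs =
        c' * (2 * (xs ⬝ᵥ A *ᵥ xs) + xs ⬝ᵥ (Q * Yt ts) *ᵥ xs + xs ⬝ᵥ (Ybar ts * Q) *ᵥ xs)
          + xs ⬝ᵥ Δ ts *ᵥ xs := by
      rw [hDident]
      simp only [sub_mulVec, add_mulVec, neg_mulVec, dotProduct_sub, dotProduct_add,
        dotProduct_neg]
      rw [quad_mul_left (hEtr ts htsIcc) hExs, quad_mul_right (N := Aᵀ) hExs, quad_transpose,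
        quad_mul_left (hEtr ts htsIcc) hExs, quad_mul_right (N := Ybar ts * Q) hExs]
      ring
    have hΔnonneg : 0 ≤ xs ⬝ᵥ Δ ts *ᵥ xs := by
      have := (hΔpsd ts htsIcc).dotProduct_mulVec_nonneg xs
      rwa [star_eq_self] at this
    have habsA : |xs ⬝ᵥ A *ᵥ xs| ≤ ∑ i, ∑ j, |A i j| := quad_abs_le (unit_abs_le hxs_unit)
    have habsQY : |xs ⬝ᵥ (Q * Yt ts) *ᵥ xs| ≤ ∑ i, ∑ j, |(Q * Yt ts) i j| :=
      quad_abs_le (unit_abs_le hxs_unit)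
    have habsYQ : |xs ⬝ᵥ (Ybar ts * Q) *ᵥ xs| ≤ ∑ i, ∑ j, |(Ybar ts * Q) i j| :=
      quad_abs_le (unit_abs_le hxs_unit)
    have hγts : γ ts ≤ K - 1 := hγK ts htsIcc
    have hgderivpos : 0 < xs ⬝ᵥ D ts *ᵥ xs + ε * (Real.exp (K * ts) * K) * (xs ⬝ᵥ xs) := by
      rw [hquadD, hxs_unit]
      have hA1 := abs_le.mp habsA
      have hA2 := abs_le.mp habsQY
      have hA3 := abs_le.mp habsYQ
      have hsum : -(γ ts) ≤ 2 * (xs ⬝ᵥ A *ᵥ xs) + xs ⬝ᵥ (Q * Yt ts) *ᵥ xs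
          + xs ⬝ᵥ (Ybar ts * Q) *ᵥ xs := by
        simp only [hγdef]
        linarith [hA1.1, hA2.1, hA3.1]
      have h1 : c' * (-(γ ts)) ≤ c' * (2 * (xs ⬝ᵥ A *ᵥ xs) + xs ⬝ᵥ (Q * Yt ts) *ᵥ xs
          + xs ⬝ᵥ (Ybar ts * Q) *ᵥ xs) := mul_le_mul_of_nonneg_left hsum hc'pos.le
      have h2 : c' * (γ ts) ≤ c' * (K - 1) := mul_le_mul_of_nonneg_left hγts hc'pos.le
      have h3 : ε * (Real.exp (K * ts) * K) * 1 = c' * K := by rw [hc'def]; ring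
      rw [h3]
      nlinarith [h1, h2, hΔnonneg, hc'pos]
    -- slope contradiction
    have hslope := hasDerivWithinAt_iff_tendsto_slope.mp hgderiv
    have hevpos : ∀ᶠ s in 𝓝[Icc 0 T \ {ts}] ts, 0 < slope g ts s :=
      hslope.eventually (eventually_gt_nhds hgderivpos)
    have hIcosub : Ico 0 ts ⊆ Icc 0 T \ {ts} := by
      intro s hs
      exact ⟨⟨hs.1, hs.2.le.trans htsIcc.2⟩, ne_of_lt hs.2⟩
    have hne : (𝓝[Ico 0 ts] ts).NeBot := by
      rw [← mem_closure_iff_nhdsWithin_neBot, closure_Ico (ne_of_gt htspos).symm]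
      exact right_mem_Icc.mpr htsIcc.1
    have hev2 : ∀ᶠ s in 𝓝[Ico 0 ts] ts, 0 < slope g ts s :=
      hevpos.filter_mono (nhdsWithin_mono _ hIcosub)
    obtain ⟨s, hspos, hsmem⟩ := (hev2.and eventually_mem_nhdsWithin).exists
    have hslopeval : slope g ts s = (g s - g ts) / (s - ts) := slope_def_field g ts s
    have hnum : 0 ≤ g s - g ts := by
      rw [hgts, sub_zero]
      exact hglow s hsmem
    have hden : s - ts ≤ 0 := by linarith [hsmem.2]
    have : slope g ts s ≤ 0 := by
      rw [hslopeval]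
      exact div_nonpos_of_nonneg_of_nonpos hnum hden
    linarith [hspos]
  -- conclude from the ε-statement
  intro t ht
  refine .of_dotProduct_mulVec_nonneg ((hYtpd t ht).1.sub (hYbarpd t ht).1) fun x => ?_
  rw [star_eq_self]
  show 0 ≤ x ⬝ᵥ (Yt t - Ybar t) *ᵥ x
  have hEq : (Yt t - Ybar t) = E t := rfl
  rw [hEq]
  set q : ℝ := x ⬝ᵥ E t *ᵥ x with hqdef
  set c : ℝ := Real.exp (K * t) * (x ⬝ᵥ x) with hcdef
  have hcnonneg : 0 ≤ c := mul_nonneg (Real.exp_nonneg _) (dot_self_nonneg x)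
  have hkey : ∀ ε : ℝ, 0 < ε → -q ≤ ε * c := by
    intro ε hε
    have := key ε hε t ht x
    rw [← hqdef] at this
    have h1 : ε * Real.exp (K * t) * (x ⬝ᵥ x) = ε * c := by rw [hcdef]; ring
    linarith [this, h1.le, h1.ge]
  have : -q ≤ 0 := by
    apply le_of_forall_pos_le_add
    intro ε' hε'
    have hc1 : 0 < c + 1 := by linarith
    have h1 := hkey (ε' / (c + 1)) (div_pos hε' hc1)
    have h2 : ε' / (c + 1) * c ≤ ε' := by
      rw [div_mul_eq_mul_div, div_le_iff₀ hc1]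
      nlinarith
    linarith
  linarith
end
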